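/- arXiv:2301.01552 — 4 statements merged into one kernel-verified Lean document; each statement's English description precedes it below -/
import Mathlib

section
/- Let A be a principal ideal domain of characteristic 0 with fraction field 𝕜, and K a finite extension of 𝕜 of degree n ≥ 3. Let α ∈ K with 𝕜(α) = K, and let f_α = a₀Xⁿ + a₁X^{n−1} + ⋯ + aₙ ∈ A[X] be a primitive minimal polynomial of α (i.e., gcd(a₀,…,aₙ) = 1). Then A_α is the free A-module with basis 1, ω₁, …, ω_{n−1}, where ω_i := a₀α^i + a₁α^{i−1} + ⋯ + a_{i−1}α for i = 1, …, n−1; that is, A_α = {x₀ + x₁ω₁ + ⋯ + x_{n−1}ω_{n−1} : x₀, …, x_{n−1} ∈ A}. -/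
noncomputable section

open Polynomial

variable (A : Type*) [CommRing A] [IsDomain A] [IsPrincipalIdealRing A] [CharZero A]
  (𝕜 : Type*) [Field 𝕜] [Algebra A 𝕜] [IsFractionRing A 𝕜]
  (K : Type*) [Field K] [Algebra 𝕜 K] [Algebra A K] [IsScalarTower A 𝕜 K]
  [FiniteDimensional 𝕜 K]

/-- The free `A`-module `M_α` generated by `1, α, …, α^(n-1)`, where `n` is the degree
of `α` over `𝕜`. -/
def MmodA (α : K) : Submodule A K :=
  Submodule.span A (Set.range fun i : Fin (minpoly 𝕜 α).natDegree => α ^ (i : ℕ))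

/-- The ring of scalars `A_α = {ξ ∈ K : ξ·M_α ⊆ M_α}` of `M_α`, as a subring of `K`. -/
def Aring (α : K) : Subring K where
  carrier := {ξ : K | ∀ m ∈ MmodA A 𝕜 K α, ξ * m ∈ MmodA A 𝕜 K α}
  one_mem' := by intro m hm; rw [one_mul]; exact hm
  mul_mem' := by intro a b ha hb m hm; rw [mul_assoc]; exact ha _ (hb _ hm)
  zero_mem' := by intro m hm; rw [zero_mul]; exact (MmodA A 𝕜 K α).zero_mem
  add_mem' := by
    intro a b ha hb m hm; rw [add_mul]; exact (MmodA A 𝕜 K α).add_mem (ha _ hm) (hb _ hm)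
  neg_mem' := by intro a ha m hm; rw [neg_mul]; exact (MmodA A 𝕜 K α).neg_mem (ha _ hm)

/-! ### Auxiliary lemmas -/

section Aux

set_option linter.unusedSectionVars false

/-- In a PID, if `a ∣ c * (coeff of f)` for every coefficient of a primitive `f`, then `a ∣ c`. -/
theorem aux_dvd_of_dvd_mul_coeff (f : A[X]) (hf : f.IsPrimitive) {a c : A}
    (h : ∀ k, a ∣ c * f.coeff k) : a ∣ c := by
  obtain ⟨g, hg⟩ : (Ideal.span (Set.range f.coeff)).IsPrincipal :=
    IsPrincipalIdealRing.principal _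
  have hgd : ∀ k, g ∣ f.coeff k := fun k => by
    rw [← Ideal.mem_span_singleton, show Ideal.span {g} = _ from hg.symm]
    exact Ideal.subset_span ⟨k, rfl⟩
  have hgu : IsUnit g := hf g ((Polynomial.C_dvd_iff_dvd_coeff g f).mpr hgd)
  have hgmem : g ∈ Submodule.span A (Set.range f.coeff) := by
    rw [show Submodule.span A (Set.range f.coeff) = Ideal.span (Set.range f.coeff) from rfl, hg]
    exact Ideal.mem_span_singleton_self g
  obtain ⟨cc, hsupp, hsum⟩ := Submodule.mem_span_set.mp hgmem
  have hacg : a ∣ c * g := by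
    rw [← hsum, Finsupp.sum, Finset.mul_sum]
    refine Finset.dvd_sum fun x hx => ?_
    obtain ⟨k, hk⟩ := hsupp hx
    rw [smul_eq_mul, mul_comm (cc x) x, ← mul_assoc, ← hk]
    exact (h k).mul_right _
  exact hgu.dvd_mul_right.mp hacg

/-- `𝕜`-scalar action vs multiplication by `algebraMap A K`. -/
theorem aux_smul_eq (a : A) (x : K) : algebraMap A 𝕜 a • x = algebraMap A K a * x := by
  rw [algebraMap_smul, Algebra.smul_def]

theorem aux_aeval_sum {α : K} {f : A[X]} (hfroot : aeval α f = 0) :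
    ∑ k ∈ Finset.range (f.natDegree + 1), algebraMap A K (f.coeff k) * α ^ k = 0 := by
  rw [Polynomial.aeval_eq_sum_range] at hfroot
  rw [← hfroot]
  exact Finset.sum_congr rfl fun k _ => (Algebra.smul_def _ _).symm

theorem aux_top_pow {α : K} {f : A[X]} (hfroot : aeval α f = 0) :
    algebraMap A K (f.coeff f.natDegree) * α ^ f.natDegree =
      -∑ k ∈ Finset.range f.natDegree, algebraMap A K (f.coeff k) * α ^ k := by
  have h := aux_aeval_sum A K hfroot
  rw [Finset.sum_range_succ] at h
  linear_combination h

/-- The element `ω_i`. -/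
def omegaK (α : K) (f : A[X]) (i : ℕ) : K :=
  ∑ j ∈ Finset.range i, algebraMap A K (f.coeff (f.natDegree - j)) * α ^ (i - j)

theorem aux_omega_succ (α : K) (f : A[X]) (i : ℕ) :
    omegaK A K α f (i + 1) =
      omegaK A K α f i * α + algebraMap A K (f.coeff (f.natDegree - i)) * α := by
  rw [omegaK, omegaK, Finset.sum_range_succ, Finset.sum_mul]
  congr 1
  · refine Finset.sum_congr rfl fun j hj => ?_
    have hj' : j < i := Finset.mem_range.mp hj
    rw [mul_assoc, ← pow_succ]
    congr 2
    omega
  · rw [show i + 1 - i = 1 by omega, pow_one]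

theorem aux_omega_top {α : K} {f : A[X]} (hfroot : aeval α f = 0) (hn : 1 ≤ f.natDegree) :
    omegaK A K α f f.natDegree = -algebraMap A K (f.coeff 0) := by
  have h := aux_aeval_sum A K hfroot
  set n := f.natDegree with hn'
  have key : omegaK A K α f n = ∑ k ∈ Finset.Ico 1 (n + 1), algebraMap A K (f.coeff k) * α ^ k := by
    rw [omegaK]
    refine Finset.sum_nbij' (fun j => n - j) (fun k => n - k) ?_ ?_ ?_ ?_ ?_
    · intro a ha
      simp only [Finset.mem_range] at ha
      simp only [Finset.mem_Ico]
      omega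
    · intro a ha
      simp only [Finset.mem_Ico] at ha
      simp only [Finset.mem_range]
      omega
    · intro a ha; simp only [Finset.mem_range] at ha; show n - (n - a) = a; omega
    · intro a ha; simp only [Finset.mem_Ico] at ha; show n - (n - a) = a; omega
    · intro a ha; rfl
  have hsplit : ∑ k ∈ Finset.Ico 0 1, algebraMap A K (f.coeff k) * α ^ k +
      ∑ k ∈ Finset.Ico 1 (n + 1), algebraMap A K (f.coeff k) * α ^ k = 0 := by
    rw [Finset.sum_Ico_consecutive _ (by omega) (by omega), ← Finset.range_eq_Ico]
    exact h
  rw [← Finset.range_eq_Ico ] at hsplit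
  simp only [Finset.range_one, Finset.sum_singleton, pow_zero, mul_one] at hsplit
  rw [key]
  linear_combination hsplit

theorem aux_pow_mem {α : K} {f : A[X]} (hdeg : f.natDegree = (minpoly 𝕜 α).natDegree)
    {k : ℕ} (hk : k < f.natDegree) : α ^ k ∈ MmodA A 𝕜 K α := by
  rw [MmodA]
  exact Submodule.subset_span ⟨⟨k, by omega⟩, rfl⟩

theorem aux_algebraMap_mul_mem {α : K} (a : A) {m : K} (hm : m ∈ MmodA A 𝕜 K α) :
    algebraMap A K a * m ∈ MmodA A 𝕜 K α := by
  rw [← Algebra.smul_def]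
  exact (MmodA A 𝕜 K α).smul_mem a hm

theorem aux_omega_mul_pow_mem {α : K} {f : A[X]} (hfroot : aeval α f = 0)
    (hdeg : f.natDegree = (minpoly 𝕜 α).natDegree) (hn : 1 ≤ f.natDegree) :
    ∀ t, t ≤ f.natDegree → ∀ k, k < f.natDegree →
      omegaK A K α f (f.natDegree - t) * α ^ k ∈ MmodA A 𝕜 K α := by
  intro t
  induction t with
  | zero =>
    intro _ k hk
    rw [Nat.sub_zero, aux_omega_top A K hfroot hn, neg_mul]
    exact (MmodA A 𝕜 K α).neg_mem (aux_algebraMap_mul_mem A 𝕜 K _ (aux_pow_mem A 𝕜 K hdeg hk))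
  | succ t ih =>
    intro ht k hk
    set n := f.natDegree with hn'
    have hisucc : n - (t + 1) + 1 = n - t := by omega
    match k with
    | 0 =>
      rw [pow_zero, mul_one, omegaK]
      refine Submodule.sum_mem _ fun j hj => ?_
      simp only [Finset.mem_range] at hj
      exact aux_algebraMap_mul_mem A 𝕜 K _ (aux_pow_mem A 𝕜 K hdeg (by omega))
    | (k' + 1) =>
      have hrec := aux_omega_succ A K α f (n - (t + 1))
      rw [hisucc] at hrec
      have hexp : omegaK A K α f (n - (t + 1)) * α ^ (k' + 1) =
          omegaK A K α f (n - t) * α ^ k' -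
            algebraMap A K (f.coeff (n - (n - (t + 1)))) * α ^ (k' + 1) := by
      
        rw [show omegaK A K α f (n - (t+1)) * α ^ (k'+1)
            = (omegaK A K α f (n - (t+1)) * α) * α ^ k' by rw [mul_assoc, ← pow_succ']
          ]
        rw [show omegaK A K α f (n - (t + 1)) * α
            = omegaK A K α f (n - t) - algebraMap A K (f.coeff (n - (n - (t + 1)))) * α by
            linear_combination -hrec]
        rw [sub_mul, mul_assoc, ← pow_succ']
      rw [hexp]
      exact (MmodA A 𝕜 K α).sub_mem (ih (by omega) k' (by omega))
        (aux_algebraMap_mul_mem A 𝕜 K _ (aux_pow_mem A 𝕜 K hdeg hk))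

theorem aux_omega_mem_Aring {α : K} {f : A[X]} (hfroot : aeval α f = 0)
    (hdeg : f.natDegree = (minpoly 𝕜 α).natDegree) {i : ℕ} (h1 : 1 ≤ i)
    (h2 : i < f.natDegree) : omegaK A K α f i ∈ Aring A 𝕜 K α := by
  intro m hm
  rw [MmodA] at hm
  induction hm using Submodule.span_induction with
  | mem x hx =>
    obtain ⟨⟨k, hk⟩, rfl⟩ := hx
    have := aux_omega_mul_pow_mem A 𝕜 K hfroot hdeg (by omega) (f.natDegree - i)
      (by omega) k (by omega)
    rwa [show f.natDegree - (f.natDegree - i) = i by omega] at this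
  | zero => rw [mul_zero]; exact (MmodA A 𝕜 K α).zero_mem
  | add x y _ _ hx hy => rw [mul_add]; exact (MmodA A 𝕜 K α).add_mem hx hy
  | smul a x _ hx => rw [mul_smul_comm]; exact (MmodA A 𝕜 K α).smul_mem a hx

theorem aux_algebraMap_mem_Aring {α : K} (a : A) : algebraMap A K a ∈ Aring A 𝕜 K α :=
  fun m hm => aux_algebraMap_mul_mem A 𝕜 K a hm

theorem aux_repr_of_eq_sum {α : K} {n : ℕ} (B : Module.Basis (Fin n) 𝕜 K)
    (hB : ∀ i : Fin n, B i = α ^ (i : ℕ)) (c : ℕ → 𝕜) (x : K)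
    (hx : x = ∑ i ∈ Finset.range n, c i • α ^ i) (j : Fin n) : B.repr x j = c j := by
  have hx' : x = ∑ i : Fin n, (fun i : Fin n => c i) i • B i := by
    rw [hx, ← Fin.sum_univ_eq_sum_range (fun i => c i • α ^ i) n]
    exact Finset.sum_congr rfl fun i _ => by rw [hB]
  rw [hx', B.repr_sum_self]

theorem aux_div_key {α : K} {f : A[X]} (hfroot : aeval α f = 0) (hprim : f.IsPrimitive)
    (hf0 : f ≠ 0) (B : Module.Basis (Fin f.natDegree) 𝕜 K)
    (hB : ∀ i : Fin f.natDegree, B i = α ^ (i : ℕ)) (hn1 : 1 ≤ f.natDegree) (η : K)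
    (hη : ∀ i, B.repr η i ∈ Set.range (algebraMap A 𝕜))
    (hηα : ∀ i, B.repr (η * α) i ∈ Set.range (algebraMap A 𝕜)) :
    ∃ t : A, B.repr η ⟨f.natDegree - 1, by omega⟩ =
      algebraMap A 𝕜 (f.coeff f.natDegree * t) := by
  set u := algebraMap A 𝕜 (f.coeff f.natDegree) with hudef
  have hlead : f.coeff f.natDegree ≠ 0 := Polynomial.leadingCoeff_ne_zero.mpr hf0
  have hu0 : u ≠ 0 := fun h => hlead (IsFractionRing.to_map_eq_zero_iff.mp h)
  set d : ℕ → 𝕜 := fun i => if h : i < f.natDegree then B.repr η ⟨i, h⟩ else 0 with hd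
  have hdmem : ∀ i, d i ∈ Set.range (algebraMap A 𝕜) := by
    intro i
    by_cases h : i < f.natDegree
    · rw [hd]; simp only [h, dif_pos]; exact hη _
    · rw [hd]; simp only [h, dif_neg]; exact ⟨0, map_zero _⟩
  have hηsum : η = ∑ i ∈ Finset.range f.natDegree, d i • α ^ i := by
    conv_lhs => rw [← B.sum_repr η]
    rw [← Fin.sum_univ_eq_sum_range (fun i => d i • α ^ i) f.natDegree]
    refine Finset.sum_congr rfl fun i _ => ?_
    have hdi : d ↑i = B.repr η i := by
      rw [hd]; simp only [i.isLt, dif_pos, Fin.eta]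
    rw [hdi, hB]
  have hαn : α ^ f.natDegree = ∑ k ∈ Finset.range f.natDegree,
      (-(u⁻¹ * algebraMap A 𝕜 (f.coeff k))) • α ^ k := by
    have h1 : u • α ^ f.natDegree =
        -∑ k ∈ Finset.range f.natDegree, algebraMap A 𝕜 (f.coeff k) • α ^ k := by
      rw [aux_smul_eq A 𝕜 K, aux_top_pow A K hfroot]
      congr 1
      exact Finset.sum_congr rfl fun k _ => (aux_smul_eq A 𝕜 K _ _).symm
    have h2 : α ^ f.natDegree = u⁻¹ • (u • α ^ f.natDegree) := by
      rw [smul_smul, inv_mul_cancel₀ hu0, one_smul]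
    rw [h2, h1, smul_neg, Finset.smul_sum, ← Finset.sum_neg_distrib]
    exact Finset.sum_congr rfl fun k _ => by rw [smul_smul, neg_smul]
  set e₁ : ℕ → 𝕜 := fun m => if 1 ≤ m then d (m - 1) else 0 with he₁
  set e₂ : ℕ → 𝕜 := fun m =>
    d (f.natDegree - 1) * (-(u⁻¹ * algebraMap A 𝕜 (f.coeff m))) with he₂
  have hsum2 : η * α = ∑ m ∈ Finset.range f.natDegree, (e₁ m + e₂ m) • α ^ m := by
    have hstep1 : η * α = ∑ i ∈ Finset.range f.natDegree, d i • α ^ (i + 1) := by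
      rw [hηsum, Finset.sum_mul]
      exact Finset.sum_congr rfl fun i _ => by rw [smul_mul_assoc, ← pow_succ]
    have hsplit : ∑ i ∈ Finset.range f.natDegree, d i • α ^ (i + 1) =
        (∑ i ∈ Finset.range (f.natDegree - 1), d i • α ^ (i + 1)) +
          d (f.natDegree - 1) • α ^ f.natDegree := by
      rw [show ∑ i ∈ Finset.range f.natDegree, d i • α ^ (i + 1)
          = ∑ i ∈ Finset.range ((f.natDegree - 1) + 1), d i • α ^ (i + 1) by
          rw [Nat.sub_add_cancel hn1]]
      rw [Finset.sum_range_succ, Nat.sub_add_cancel hn1]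
    have hc1 : ∑ m ∈ Finset.range f.natDegree, e₁ m • α ^ m =
        ∑ i ∈ Finset.range (f.natDegree - 1), d i • α ^ (i + 1) := by
      rw [show ∑ m ∈ Finset.range f.natDegree, e₁ m • α ^ m
          = ∑ m ∈ Finset.range ((f.natDegree - 1) + 1), e₁ m • α ^ m by
          rw [Nat.sub_add_cancel hn1]]
      rw [Finset.sum_range_succ' (fun m => e₁ m • α ^ m) (f.natDegree - 1)]
      have hz : e₁ 0 • α ^ 0 = 0 := by
        rw [he₁]; simp
      rw [hz, add_zero]
      refine Finset.sum_congr rfl fun i _ => ?_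
      rw [he₁]
      simp only [le_add_iff_nonneg_left, zero_le, if_pos, Nat.add_sub_cancel]
    have hc2 : d (f.natDegree - 1) • α ^ f.natDegree =
        ∑ m ∈ Finset.range f.natDegree, e₂ m • α ^ m := by
      rw [hαn, Finset.smul_sum]
      exact Finset.sum_congr rfl fun m _ => by rw [smul_smul]
    calc η * α = ∑ i ∈ Finset.range f.natDegree, d i • α ^ (i + 1) := hstep1
      _ = (∑ m ∈ Finset.range f.natDegree, e₁ m • α ^ m) +
            ∑ m ∈ Finset.range f.natDegree, e₂ m • α ^ m := by
          rw [hsplit, hc1, hc2]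
      _ = ∑ m ∈ Finset.range f.natDegree, (e₁ m + e₂ m) • α ^ m := by
          rw [← Finset.sum_add_distrib]
          exact Finset.sum_congr rfl fun m _ => (add_smul _ _ _).symm
  have hrepr : ∀ m : Fin f.natDegree, B.repr (η * α) m = e₁ ↑m + e₂ ↑m :=
    aux_repr_of_eq_sum 𝕜 K B hB _ _ hsum2
  obtain ⟨c, hc⟩ := hdmem (f.natDegree - 1)
  have hkey : ∀ k, f.coeff f.natDegree ∣ c * f.coeff k := by
    intro k
    rcases lt_trichotomy k f.natDegree with hk | hk | hk
    · obtain ⟨p, hp⟩ := hηα ⟨k, hk⟩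
      obtain ⟨q, hq⟩ : e₁ k ∈ Set.range (algebraMap A 𝕜) := by
        rw [he₁]
        dsimp only
        split
        · exact hdmem _
        · exact ⟨0, map_zero _⟩
      have he2k : e₂ k = algebraMap A 𝕜 p - e₁ k := by
        have h3 := hrepr ⟨k, hk⟩
        rw [← hp] at h3
        simp only [Fin.val_mk] at h3
        linear_combination -h3
      have h7 : e₂ k = d (f.natDegree - 1) * -(u⁻¹ * algebraMap A 𝕜 (f.coeff k)) := by
        rw [he₂]
      have h6 : algebraMap A 𝕜 c * -(u⁻¹ * algebraMap A 𝕜 (f.coeff k)) =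
          algebraMap A 𝕜 p - algebraMap A 𝕜 q := by
        rw [hc, ← h7, he2k, hq]
      have h9 : algebraMap A 𝕜 (c * f.coeff k) =
          algebraMap A 𝕜 ((q - p) * f.coeff f.natDegree) := by
        rw [map_mul, map_mul, map_sub, ← hudef]
        field_simp at h6
        linear_combination -h6
      have h5 := IsFractionRing.injective A 𝕜 h9
      exact ⟨q - p, by rw [h5]; ring⟩
    · exact ⟨c, by rw [hk, mul_comm]⟩
    · rw [Polynomial.coeff_eq_zero_of_natDegree_lt hk, mul_zero]
      exact dvd_zero _
  obtain ⟨t, ht⟩ := aux_dvd_of_dvd_mul_coeff A f hprim hkey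
  refine ⟨t, ?_⟩
  have hdn : d (f.natDegree - 1) = B.repr η ⟨f.natDegree - 1, by omega⟩ := by
    rw [hd]; simp only [show f.natDegree - 1 < f.natDegree by omega, dif_pos]
  rw [← hdn, ← hc, ht]

end Aux

/-- Let `A` be a PID of characteristic `0` with fraction field `𝕜`, `K` a
finite extension of `𝕜` of degree `n ≥ 3`, `α ∈ K` with `𝕜(α) = K`, and
`f = a₀Xⁿ + ⋯ + aₙ ∈ A[X]` a primitive minimal polynomial of `α`. Then
`A_α = {x₀ + x₁ω₁ + ⋯ + x_{n-1}ω_{n-1} : x₀, …, x_{n-1} ∈ A}`, where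
`ω_i = a₀α^i + a₁α^{i-1} + ⋯ + a_{i-1}α` (here `a_j = f.coeff (n - j)`). -/
theorem ring_of_scalars_eq_span_omega
    (hn : 3 ≤ Module.finrank 𝕜 K) (α : K) (hα : Algebra.adjoin 𝕜 {α} = ⊤)
    (f : Polynomial A) (hf0 : f ≠ 0) (hfroot : aeval α f = 0)
    (hfdeg : f.natDegree = (minpoly 𝕜 α).natDegree) (hfprim : f.IsPrimitive) :
    (Aring A 𝕜 K α : Set K) =
      {ξ : K | ∃ x : ℕ → A,
        ξ = algebraMap A K (x 0) + ∑ i ∈ Finset.Ico 1 (Module.finrank 𝕜 K),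
          algebraMap A K (x i) *
            (∑ j ∈ Finset.range i,
              algebraMap A K (f.coeff (Module.finrank 𝕜 K - j)) * α ^ (i - j))} := by
  classical
  have hint : IsIntegral 𝕜 α := IsIntegral.of_finite 𝕜 α
  let pb : PowerBasis 𝕜 K :=
    (Algebra.adjoin.powerBasis hint).map
      ((Subalgebra.equivOfEq _ _ hα).trans Subalgebra.topEquiv)
  have hgen : pb.gen = α := rfl
  have hdim : pb.dim = (minpoly 𝕜 α).natDegree := rfl
  have hrank : Module.finrank 𝕜 K = f.natDegree := by
    rw [pb.finrank, hdim, hfdeg]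
  have hn3 : 3 ≤ f.natDegree := hrank ▸ hn
  let e : Fin pb.dim ≃ Fin f.natDegree := finCongr (by rw [hdim, hfdeg])
  let B : Module.Basis (Fin f.natDegree) 𝕜 K := pb.basis.reindex e
  have hB : ∀ i : Fin f.natDegree, B i = α ^ (i : ℕ) := by
    intro i
    rw [show B i = pb.basis (e.symm i) from Module.Basis.reindex_apply pb.basis e i,
      PowerBasis.coe_basis, hgen]
    congr 1
  have hMB : ∀ x : K, x ∈ MmodA A 𝕜 K α ↔
      ∀ i, B.repr x i ∈ Set.range (algebraMap A 𝕜) := by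
    intro x
    have hre : (Set.range fun i : Fin (minpoly 𝕜 α).natDegree => α ^ (i : ℕ))
        = Set.range ⇑B := by
      ext y
      constructor
      · rintro ⟨i, rfl⟩
        exact ⟨⟨↑i, by omega⟩, by rw [hB]⟩
      · rintro ⟨i, rfl⟩
        exact ⟨⟨↑i, by omega⟩, by rw [hB]⟩
    rw [MmodA, hre]
    exact B.mem_span_iff_repr_mem A x
  have h1M : (1 : K) ∈ MmodA A 𝕜 K α := by
    have := aux_pow_mem A 𝕜 K hfdeg (k := 0) (by omega)
    rwa [pow_zero] at this
  have desc : ∀ m, m < f.natDegree → ∀ ξ, ξ ∈ Aring A 𝕜 K α →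
      (∀ i : Fin f.natDegree, m < (i : ℕ) → B.repr ξ i = 0) →
      ∃ x : ℕ → A, ξ = algebraMap A K (x 0) +
        ∑ i ∈ Finset.Ico 1 f.natDegree, algebraMap A K (x i) * omegaK A K α f i := by
    intro m
    induction m with
    | zero =>
      intro _ ξ hξA hvan
      have hξM : ξ ∈ MmodA A 𝕜 K α := by
        have := hξA 1 h1M
        rwa [mul_one] at this
      obtain ⟨x₀, hx₀⟩ := (hMB ξ).mp hξM ⟨0, by omega⟩
      have hξeq : ξ = algebraMap A K x₀ := by
        conv_lhs => rw [← B.sum_repr ξ]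
        rw [Finset.sum_eq_single_of_mem (⟨0, by omega⟩ : Fin f.natDegree) (Finset.mem_univ _)
          (fun i _ hi => by
            refine (smul_eq_zero_of_left (hvan i ?_) _)
            rcases Nat.eq_zero_or_pos (↑i : ℕ) with h0 | h0
            · exact absurd (Fin.ext h0) hi
            · omega)]
        rw [← hx₀, hB, pow_zero, aux_smul_eq A 𝕜 K, mul_one]
      refine ⟨fun i => if i = 0 then x₀ else 0, ?_⟩
      dsimp only
      rw [if_pos rfl, Finset.sum_eq_zero (fun i hi => by
        rw [if_neg (by rw [Finset.mem_Ico] at hi; omega), map_zero, zero_mul]), add_zero]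
      exact hξeq
    | succ m ih =>
      intro hm1 ξ hξA hvan
      have hm1' : m + 1 < f.natDegree := hm1
      set rξ : ℕ → 𝕜 := fun i => if h : i < f.natDegree then B.repr ξ ⟨i, h⟩ else 0 with hrξ
      have hξM : ξ ∈ MmodA A 𝕜 K α := by
        have := hξA 1 h1M
        rwa [mul_one] at this
      have hξsum : ξ = ∑ i ∈ Finset.range f.natDegree, rξ i • α ^ i := by
        conv_lhs => rw [← B.sum_repr ξ]
        rw [← Fin.sum_univ_eq_sum_range (fun i => rξ i • α ^ i) f.natDegree]
        refine Finset.sum_congr rfl fun i _ => ?_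
        have hdi : rξ ↑i = B.repr ξ i := by
          rw [hrξ]; simp only [i.isLt, dif_pos, Fin.eta]
        rw [hdi, hB]
      have hξsum' : ξ = ∑ i ∈ Finset.range (m + 2), rξ i • α ^ i := by
        rw [hξsum]
        refine (Finset.sum_subset (Finset.range_subset_range.mpr (by omega)) fun i hi hni => ?_).symm
        have hlt : i < f.natDegree := Finset.mem_range.mp hi
        have hgt : m + 1 < i := by
          rw [Finset.mem_range, not_lt] at hni; omega
        rw [hrξ]
        simp only [hlt, dif_pos]
        rw [hvan ⟨i, hlt⟩ hgt, zero_smul]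
      set s := f.natDegree - m - 2 with hs
      set η := ξ * α ^ s with hηdef
      have hηM : η ∈ MmodA A 𝕜 K α := hξA _ (aux_pow_mem A 𝕜 K hfdeg (by omega))
      have hηαM : η * α ∈ MmodA A 𝕜 K α := by
        rw [hηdef, mul_assoc, ← pow_succ]
        exact hξA _ (aux_pow_mem A 𝕜 K hfdeg (by omega))
      set dd : ℕ → 𝕜 := fun p => if s ≤ p then rξ (p - s) else 0 with hdd
      have hηsum : η = ∑ p ∈ Finset.range f.natDegree, dd p • α ^ p := by
        rw [hηdef, hξsum', Finset.sum_mul, eq_comm]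
        rw [← Finset.sum_subset
          (show Finset.Ico s f.natDegree ⊆ Finset.range f.natDegree by
            intro p hp
            rw [Finset.mem_Ico] at hp
            rw [Finset.mem_range]
            omega)
          (fun p hp hnp => by
            rw [Finset.mem_range] at hp
            rw [Finset.mem_Ico] at hnp
            rw [hdd]
            simp only
            rw [if_neg (by omega), zero_smul])]
        rw [Finset.sum_Ico_eq_sum_range, show f.natDegree - s = m + 2 by omega]
        refine Finset.sum_congr rfl fun i hi => ?_
        rw [Finset.mem_range] at hi
        rw [hdd]
        simp only
        rw [if_pos (by omega), show s + i - s = i by omega, smul_mul_assoc, ← pow_add,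
          add_comm i s]
      have hηrepr : ∀ p : Fin f.natDegree, B.repr η p = dd ↑p :=
        aux_repr_of_eq_sum 𝕜 K B hB _ _ hηsum
      obtain ⟨t, ht⟩ := aux_div_key A 𝕜 K hfroot hfprim hf0 B hB (by omega) η
        ((hMB η).mp hηM) ((hMB (η * α)).mp hηαM)
      have htop : B.repr ξ ⟨m + 1, hm1'⟩ = algebraMap A 𝕜 (f.coeff f.natDegree * t) := by
        have h1 := hηrepr ⟨f.natDegree - 1, by omega⟩
        have h3 : dd (f.natDegree - 1) = rξ (m + 1) := by
          rw [hdd]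
          simp only
          rw [if_pos (by omega), show f.natDegree - 1 - s = m + 1 by omega]
        have h4 : rξ (m + 1) = B.repr ξ ⟨m + 1, hm1'⟩ := by
          rw [hrξ]; simp only [hm1', dif_pos]
        rw [← h4, ← h3, ← h1]
        exact ht
      set ξ' := ξ - algebraMap A K t * omegaK A K α f (m + 1) with hξ'def
      have hξ'A : ξ' ∈ Aring A 𝕜 K α :=
        Subring.sub_mem _ hξA (Subring.mul_mem _ (aux_algebraMap_mem_Aring A 𝕜 K t)
          (aux_omega_mem_Aring A 𝕜 K hfroot hfdeg (by omega) hm1'))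
      set w : ℕ → 𝕜 := fun p => if 1 ≤ p ∧ p ≤ m + 1 then
        algebraMap A 𝕜 (f.coeff (f.natDegree - (m + 1) + p)) else 0 with hw
      have hωsum : omegaK A K α f (m + 1) = ∑ p ∈ Finset.range f.natDegree, w p • α ^ p := by
        rw [omegaK]
        have key : ∑ j ∈ Finset.range (m + 1),
              algebraMap A K (f.coeff (f.natDegree - j)) * α ^ (m + 1 - j)
            = ∑ p ∈ Finset.Ico 1 (m + 2),
              algebraMap A K (f.coeff (f.natDegree - (m + 1) + p)) * α ^ p := by
          refine Finset.sum_nbij' (fun j => m + 1 - j) (fun p => m + 1 - p) ?_ ?_ ?_ ?_ ?_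
          · intro a ha
            simp only [Finset.mem_range] at ha
            simp only [Finset.mem_Ico]
            omega
          · intro a ha
            simp only [Finset.mem_Ico] at ha
            simp only [Finset.mem_range]
            omega
          · intro a ha; simp only [Finset.mem_range] at ha; show m + 1 - (m + 1 - a) = a; omega
          · intro a ha; simp only [Finset.mem_Ico] at ha; show m + 1 - (m + 1 - a) = a; omega
          · intro a ha
            rw [Finset.mem_range] at ha
            show algebraMap A K (f.coeff (f.natDegree - a)) * α ^ (m + 1 - a)
              = algebraMap A K (f.coeff (f.natDegree - (m + 1) + (m + 1 - a))) * α ^ (m + 1 - a)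
            rw [show f.natDegree - (m + 1) + (m + 1 - a) = f.natDegree - a by omega]
        rw [key, eq_comm,
          ← Finset.sum_subset (show Finset.Ico 1 (m + 2) ⊆ Finset.range f.natDegree by
            intro p hp
            rw [Finset.mem_Ico] at hp
            rw [Finset.mem_range]
            omega)
          (fun p hp hnp => by
            rw [Finset.mem_range] at hp
            rw [Finset.mem_Ico] at hnp
            rw [hw]
            simp only
            rw [if_neg (by omega), zero_smul])]
        refine Finset.sum_congr rfl fun p hp => ?_
        rw [Finset.mem_Ico] at hp
        rw [hw]
        simp only
        rw [if_pos (by omega), aux_smul_eq A 𝕜 K]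
      have hξ'sum : ξ' = ∑ p ∈ Finset.range f.natDegree,
          (rξ p - algebraMap A 𝕜 t * w p) • α ^ p := by
        rw [hξ'def]
        conv_lhs => rw [hξsum, hωsum]
        rw [show algebraMap A K t * (∑ p ∈ Finset.range f.natDegree, w p • α ^ p)
            = ∑ p ∈ Finset.range f.natDegree, (algebraMap A 𝕜 t * w p) • α ^ p by
          rw [← aux_smul_eq A 𝕜 K, Finset.smul_sum]
          exact Finset.sum_congr rfl fun p _ => by rw [smul_smul]]
        rw [← Finset.sum_sub_distrib]
        exact Finset.sum_congr rfl fun p _ => (sub_smul _ _ _).symm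
      have hvan' : ∀ i : Fin f.natDegree, m < (i : ℕ) → B.repr ξ' i = 0 := by
        intro i hi
        rw [aux_repr_of_eq_sum 𝕜 K B hB _ _ hξ'sum i]
        rcases Nat.lt_or_ge m (↑i - 1) with h | h
        · -- ↑i > m + 1
          have hgt : m + 1 < ↑i := by omega
          have h1 : rξ ↑i = 0 := by
            rw [hrξ]; simp only [i.isLt, dif_pos, Fin.eta]
            exact hvan i (by omega)
          have h2 : w ↑i = 0 := by
            rw [hw]; simp only; rw [if_neg (by omega)]
          rw [h1, h2, mul_zero, sub_zero]
        · -- ↑i = m + 1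
          have hieq : (↑i : ℕ) = m + 1 := by omega
          have h1 : rξ ↑i = algebraMap A 𝕜 (f.coeff f.natDegree * t) := by
            rw [hrξ]; simp only [i.isLt, dif_pos]
            rw [show (⟨(↑i : ℕ), i.isLt⟩ : Fin f.natDegree) = ⟨m + 1, hm1'⟩ by
              rw [Fin.mk.injEq]; omega]
            exact htop
          have h2 : w ↑i = algebraMap A 𝕜 (f.coeff f.natDegree) := by
            rw [hw]; simp only
            rw [if_pos (by omega), show f.natDegree - (m + 1) + ↑i = f.natDegree by omega]
          rw [h1, h2, ← map_mul, ← map_sub, show f.coeff f.natDegree * t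
            - t * f.coeff f.natDegree = 0 by ring, map_zero]
      obtain ⟨x', hx'⟩ := ih (by omega) ξ' hξ'A hvan'
      refine ⟨fun i => if i = m + 1 then x' i + t else x' i, ?_⟩
      dsimp only
      have hξre : ξ = ξ' + algebraMap A K t * omegaK A K α f (m + 1) := by
        rw [hξ'def]; ring
      rw [hξre, hx']
      rw [if_neg (show ¬(0 = m + 1) by omega)]
      rw [add_assoc]
      congr 1
      have hsplit : ∀ i ∈ Finset.Ico 1 f.natDegree,
          algebraMap A K (if i = m + 1 then x' i + t else x' i) * omegaK A K α f i
          = algebraMap A K (x' i) * omegaK A K α f i +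
            (if i = m + 1 then algebraMap A K t * omegaK A K α f i else 0) := by
        intro i _
        by_cases h : i = m + 1
        · rw [if_pos h, if_pos h, map_add, add_mul]
        · rw [if_neg h, if_neg h, add_zero]
      rw [Finset.sum_congr rfl hsplit, Finset.sum_add_distrib,
        Finset.sum_ite_eq' (Finset.Ico 1 f.natDegree) (m + 1)
          (fun i => algebraMap A K t * omegaK A K α f i),
        if_pos (Finset.mem_Ico.mpr ⟨by omega, by omega⟩)]
  rw [hrank]
  ext ξ
  constructor
  · intro hξ
    obtain ⟨x, hx⟩ := desc (f.natDegree - 1) (by omega) ξ hξ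
      (fun i hi => absurd i.isLt (by omega))
    exact ⟨x, hx⟩
  · rintro ⟨x, rfl⟩
    rw [SetLike.mem_coe]
    refine Subring.add_mem _ (aux_algebraMap_mem_Aring A 𝕜 K (x 0)) ?_
    refine Subring.sum_mem _ fun i hi => ?_
    rw [Finset.mem_Ico] at hi
    exact Subring.mul_mem _ (aux_algebraMap_mem_Aring A 𝕜 K (x i))
      (aux_omega_mem_Aring A 𝕜 K hfroot hfdeg hi.1 hi.2)
end
end

section
/- Let A be a principal ideal domain of characteristic 0 with fraction field 𝕜, and K a finite extension of 𝕜 of degree n ≥ 3. Let α ∈ K with 𝕜(α) = K. Then A_α = A[α] ∩ A[α⁻¹]. -/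
noncomputable section

open Polynomial

variable (A : Type*) [CommRing A] [IsDomain A] [IsPrincipalIdealRing A] [CharZero A]
  (𝕜 : Type*) [Field 𝕜] [Algebra A 𝕜] [IsFractionRing A 𝕜]
  (K : Type*) [Field K] [Algebra 𝕜 K] [Algebra A K] [IsScalarTower A 𝕜 K]
  [FiniteDimensional 𝕜 K]

/-- Let `A` be a PID of characteristic `0` with fraction field `𝕜`, `K` a
finite extension of `𝕜` of degree `n ≥ 3`, and `α ∈ K` with `𝕜(α) = K`. Then
`A_α = A[α] ∩ A[α⁻¹]`. -/
theorem ring_of_scalars_eq_adjoin_inter_adjoin_inv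
    (hn : 3 ≤ Module.finrank 𝕜 K) (α : K) (hα : Algebra.adjoin 𝕜 {α} = ⊤) :
    (Aring A 𝕜 K α : Set K) =
      (Algebra.adjoin A {α} : Set K) ∩ (Algebra.adjoin A {α⁻¹} : Set K) := by
  classical
  letI : NormalizationMonoid A :=
    (UniqueFactorizationMonoid.normalizationMonoid (α := A)).toNormalizationMonoid
  letI : NormalizedGCDMonoid A := UniqueFactorizationMonoid.toNormalizedGCDMonoid A
  have hint : IsIntegral 𝕜 α := IsIntegral.of_finite 𝕜 α
  set n := (minpoly 𝕜 α).natDegree with hndef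
  have hn1 : 0 < n := minpoly.natDegree_pos hint
  have hα0 : α ≠ 0 := by
    rintro rfl
    have h1 : Algebra.adjoin 𝕜 ({(0 : K)} : Set K) ≤ ⊥ := Algebra.adjoin_le (by simp)
    rw [hα] at h1
    have h2 : (⊥ : Subalgebra 𝕜 K) = ⊤ := le_antisymm bot_le h1
    have h3 := Subalgebra.bot_eq_top_iff_finrank_eq_one.mp h2
    omega
  have hpow_mem : ∀ i, i < n → α ^ i ∈ MmodA A 𝕜 K α := fun i hi =>
    Submodule.subset_span ⟨⟨i, hi⟩, rfl⟩
  have hdeg_mem : ∀ r : A[X], r.natDegree < n → aeval α r ∈ MmodA A 𝕜 K α := by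
    intro r hr
    rw [Polynomial.aeval_eq_sum_range' hr]
    exact Submodule.sum_mem _ fun i hi =>
      Submodule.smul_mem _ _ (hpow_mem i (Finset.mem_range.mp hi))
  have hAr : ∀ ξ : K, (∀ i, i < n → ξ * α ^ i ∈ MmodA A 𝕜 K α) → ξ ∈ Aring A 𝕜 K α := by
    intro ξ h
    show ∀ m ∈ MmodA A 𝕜 K α, ξ * m ∈ MmodA A 𝕜 K α
    intro m hm
    induction hm using Submodule.span_induction with
    | mem x hx => obtain ⟨i, rfl⟩ := hx; exact h i i.isLt
    | zero => rw [mul_zero]; exact Submodule.zero_mem _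
    | add x y hx hy ihx ihy => rw [mul_add]; exact Submodule.add_mem _ ihx ihy
    | smul a x hx ih => rw [mul_smul_comm]; exact Submodule.smul_mem _ _ ih
  have halg : ∀ a : A, algebraMap A K a ∈ Aring A 𝕜 K α := by
    intro a; apply hAr; intro i hi
    rw [← Algebra.smul_def]
    exact Submodule.smul_mem _ _ (hpow_mem i hi)
  have hdiv : ∀ f g q r : A[X], g.Monic → r + g * q = f → r.degree < g.degree → f /ₘ g = q :=
    fun f g q r hg h1 h2 => (Polynomial.div_modByMonic_unique q r hg ⟨h1, h2⟩).1
  -- construct the primitive minimal polynomial `P` over `A`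
  obtain ⟨b, hb⟩ :=
    IsLocalization.integerNormalization_map_to_map (nonZeroDivisors A) (minpoly 𝕜 α)
  set G : A[X] := IsLocalization.integerNormalization (nonZeroDivisors A) (minpoly 𝕜 α)
    with hGdef
  have hm0 : minpoly 𝕜 α ≠ 0 := minpoly.ne_zero hint
  have hbK : algebraMap A 𝕜 (b : A) ≠ 0 :=
    (map_ne_zero_iff _ (IsFractionRing.injective A 𝕜)).mpr (nonZeroDivisors.ne_zero b.2)
  have hsm : G.map (algebraMap A 𝕜) = C (algebraMap A 𝕜 (b : A)) * minpoly 𝕜 α := by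
    rw [hb, algebra_compatible_smul 𝕜, Polynomial.smul_eq_C_mul]
  have hGne : G ≠ 0 := by
    intro h0
    rw [h0, Polynomial.map_zero] at hsm
    exact mul_ne_zero (by simpa [Polynomial.C_eq_zero] using hbK) hm0 hsm.symm
  set P : A[X] := G.primPart with hPdef
  have hPprim : P.IsPrimitive := G.isPrimitive_primPart
  have hGP : G = C G.content * P := G.eq_C_content_mul_primPart
  have hcK : algebraMap A 𝕜 G.content ≠ 0 :=
    (map_ne_zero_iff _ (IsFractionRing.injective A 𝕜)).mpr
      (by simpa [Polynomial.content_eq_zero_iff] using hGne)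
  have hPmap : C (algebraMap A 𝕜 G.content) * P.map (algebraMap A 𝕜) =
      C (algebraMap A 𝕜 (b : A)) * minpoly 𝕜 α := by
    rw [← Polynomial.map_C, ← Polynomial.map_mul, ← hGP]
    exact hsm
  have hPα : aeval α P = 0 := by
    have h2 := congrArg (aeval α) hPmap
    simp only [map_mul, Polynomial.aeval_C, minpoly.aeval, mul_zero] at h2
    have h3 : aeval α (P.map (algebraMap A 𝕜)) = 0 := by
      rcases mul_eq_zero.mp h2 with h | h
      · exact absurd h ((map_ne_zero_iff _ (algebraMap 𝕜 K).injective).mpr hcK)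
      · exact h
    rwa [Polynomial.aeval_map_algebraMap] at h3
  have hPdeg : P.natDegree = n := by
    have h1 : P.natDegree = G.natDegree := G.natDegree_primPart
    have h2 : G.natDegree = (G.map (algebraMap A 𝕜)).natDegree :=
      (Polynomial.natDegree_map_eq_of_injective (IsFractionRing.injective A 𝕜) G).symm
    rw [h1, h2, hsm, Polynomial.natDegree_C_mul hbK]
  have hPdvd : ∀ F : A[X], aeval α F = 0 → P ∣ F := by
    intro F hF
    by_cases hF0 : F = 0
    · rw [hF0]; exact dvd_zero P
    have h1 : minpoly 𝕜 α ∣ F.map (algebraMap A 𝕜) :=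
      minpoly.dvd 𝕜 α (by rw [Polynomial.aeval_map_algebraMap]; exact hF)
    have hPm : P.map (algebraMap A 𝕜) ∣ minpoly 𝕜 α := by
      refine ⟨C ((algebraMap A 𝕜 (b : A))⁻¹ * algebraMap A 𝕜 G.content), ?_⟩
      calc minpoly 𝕜 α
          = C ((algebraMap A 𝕜 (b : A))⁻¹) * (C (algebraMap A 𝕜 (b : A)) * minpoly 𝕜 α) := by
            rw [← mul_assoc, ← Polynomial.C_mul, inv_mul_cancel₀ hbK, Polynomial.C_1, one_mul]
        _ = C ((algebraMap A 𝕜 (b : A))⁻¹) *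
              (C (algebraMap A 𝕜 G.content) * P.map (algebraMap A 𝕜)) := by rw [hPmap]
        _ = P.map (algebraMap A 𝕜) *
              C ((algebraMap A 𝕜 (b : A))⁻¹ * algebraMap A 𝕜 G.content) := by
            rw [Polynomial.C_mul]; ring
    have hFc : algebraMap A 𝕜 F.content ≠ 0 :=
      (map_ne_zero_iff _ (IsFractionRing.injective A 𝕜)).mpr
        (by simpa [Polynomial.content_eq_zero_iff] using hF0)
    have h3 : P.map (algebraMap A 𝕜) ∣ F.primPart.map (algebraMap A 𝕜) := by
      have h4 : P.map (algebraMap A 𝕜) ∣ F.map (algebraMap A 𝕜) := hPm.trans h1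
      have h5' : F.map (algebraMap A 𝕜) =
          C (algebraMap A 𝕜 F.content) * F.primPart.map (algebraMap A 𝕜) := by
        conv_lhs => rw [show F = C F.content * F.primPart from F.eq_C_content_mul_primPart]
        rw [Polynomial.map_mul, Polynomial.map_C]
      have h5 : F.primPart.map (algebraMap A 𝕜) =
          C ((algebraMap A 𝕜 F.content)⁻¹) * F.map (algebraMap A 𝕜) := by
        rw [h5', ← mul_assoc, ← Polynomial.C_mul, inv_mul_cancel₀ hFc, Polynomial.C_1, one_mul]
      rw [h5]
      exact h4.mul_left _
    have h6 : P ∣ F.primPart :=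
      hPprim.dvd_of_fraction_map_dvd_fraction_map h3
    exact h6.trans F.primPart_dvd
  -- the "partial quotients" of `P` are scalars of `M`
  have hβ : ∀ t : ℕ, aeval α (P /ₘ X ^ t) ∈ Aring A 𝕜 K α := by
    intro t
    apply hAr
    intro j hj
    by_cases hjt : t ≤ j
    · have h0 := congrArg (aeval α) (Polynomial.modByMonic_add_div P (X ^ t))
      rw [map_add, map_mul, map_pow, Polynomial.aeval_X, hPα] at h0
      have heq : aeval α (P /ₘ X ^ t) * α ^ j = aeval α (-(X ^ (j - t) * (P %ₘ X ^ t))) := by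
        rw [map_neg, map_mul, map_pow, Polynomial.aeval_X]
        have hx : α ^ j = α ^ (j - t) * α ^ t := by rw [← pow_add, Nat.sub_add_cancel hjt]
        rw [hx]
        linear_combination (α ^ (j - t)) * h0
      rw [heq]
      by_cases hr0 : P %ₘ X ^ t = 0
      · rw [hr0]; simpa using Submodule.zero_mem _
      · apply hdeg_mem
        rw [Polynomial.natDegree_neg]
        have h1 : (P %ₘ X ^ t).natDegree < t := by
          have h2 := Polynomial.degree_modByMonic_lt P (monic_X_pow t)
          rwa [Polynomial.degree_X_pow, ← Polynomial.natDegree_lt_iff_degree_lt hr0] at h2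
        have h2 := Polynomial.natDegree_mul_le (p := (X : A[X]) ^ (j - t)) (q := P %ₘ X ^ t)
        rw [Polynomial.natDegree_X_pow] at h2
        omega
    · have heq : aeval α (P /ₘ X ^ t) * α ^ j = aeval α (X ^ j * (P /ₘ X ^ t)) := by
        rw [map_mul, map_pow, Polynomial.aeval_X, mul_comm]
      rw [heq]
      apply hdeg_mem
      have h2 := Polynomial.natDegree_mul_le (p := (X : A[X]) ^ j) (q := P /ₘ X ^ t)
      rw [Polynomial.natDegree_X_pow] at h2
      have h3 : (P /ₘ X ^ t).natDegree = n - t := by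
        rw [Polynomial.natDegree_divByMonic P (monic_X_pow t), hPdeg, Polynomial.natDegree_X_pow]
      omega
  -- the key lemma
  have hkey : ∀ (Q : A[X]) (s : ℕ), aeval α ((P * Q) /ₘ X ^ s) ∈ Aring A 𝕜 K α := by
    intro Q
    induction Q using Polynomial.induction_on' with
    | add q r hq hr =>
      intro s
      have hXs : ((X : A[X]) ^ s).Monic := monic_X_pow s
      have hd : (P * (q + r)) /ₘ X ^ s = (P * q) /ₘ X ^ s + (P * r) /ₘ X ^ s := by
        apply hdiv _ _ _ ((P * q) %ₘ X ^ s + (P * r) %ₘ X ^ s) hXs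
        · have e1 := Polynomial.modByMonic_add_div (P * q) (X ^ s)
          have e2 := Polynomial.modByMonic_add_div (P * r) (X ^ s)
          linear_combination e1 + e2
        · exact lt_of_le_of_lt (Polynomial.degree_add_le _ _)
            (max_lt (Polynomial.degree_modByMonic_lt _ hXs)
              (Polynomial.degree_modByMonic_lt _ hXs))
      rw [hd, map_add]
      exact (Aring A 𝕜 K α).add_mem (hq s) (hr s)
    | monomial m c =>
      intro s
      have hXs : ((X : A[X]) ^ s).Monic := monic_X_pow s
      have hmon : P * monomial m c = C c * (P * X ^ m) := by
        rw [← Polynomial.C_mul_X_pow_eq_monomial]; ring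
      have hC : (C c * (P * X ^ m)) /ₘ X ^ s = C c * ((P * X ^ m) /ₘ X ^ s) := by
        apply hdiv _ _ _ (C c * ((P * X ^ m) %ₘ X ^ s)) hXs
        · linear_combination (C c : A[X]) * Polynomial.modByMonic_add_div (P * X ^ m) (X ^ s)
        · refine lt_of_le_of_lt ?_ (Polynomial.degree_modByMonic_lt (P * X ^ m) hXs)
          calc (C c * ((P * X ^ m) %ₘ X ^ s)).degree
              ≤ (C c).degree + ((P * X ^ m) %ₘ X ^ s).degree := Polynomial.degree_mul_le _ _
            _ ≤ 0 + ((P * X ^ m) %ₘ X ^ s).degree :=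
                add_le_add Polynomial.degree_C_le le_rfl
            _ = ((P * X ^ m) %ₘ X ^ s).degree := zero_add _
      rw [hmon, hC, map_mul, Polynomial.aeval_C]
      refine (Aring A 𝕜 K α).mul_mem (halg c) ?_
      by_cases hms : s ≤ m
      · have hd : (P * X ^ m) /ₘ X ^ s = P * X ^ (m - s) := by
          apply hdiv _ _ _ 0 hXs
          · rw [zero_add, mul_left_comm, ← pow_add, Nat.add_sub_cancel' hms]
          · rw [Polynomial.degree_zero, Polynomial.degree_X_pow]
            exact WithBot.bot_lt_coe _
        rw [hd, map_mul, hPα, zero_mul]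
        exact (Aring A 𝕜 K α).zero_mem
      · push_neg at hms
        have hXsb : ((X : A[X]) ^ (s - m)).Monic := monic_X_pow _
        have hd : (P * X ^ m) /ₘ X ^ s = P /ₘ X ^ (s - m) := by
          apply hdiv _ _ _ (X ^ m * (P %ₘ X ^ (s - m))) hXs
          · have e1 := Polynomial.modByMonic_add_div P (X ^ (s - m))
            have hx : (X : A[X]) ^ s = X ^ m * X ^ (s - m) := by
              rw [← pow_add, Nat.add_sub_cancel' hms.le]
            rw [hx]
            linear_combination ((X : A[X]) ^ m) * e1
          · rw [Polynomial.degree_X_pow]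
            by_cases hr0 : P %ₘ X ^ (s - m) = 0
            · rw [hr0, mul_zero, Polynomial.degree_zero]
              exact WithBot.bot_lt_coe _
            · have h1 : (P %ₘ X ^ (s - m)).natDegree < s - m := by
                have h2 := Polynomial.degree_modByMonic_lt P hXsb
                rwa [Polynomial.degree_X_pow, ← Polynomial.natDegree_lt_iff_degree_lt hr0] at h2
              have hne : (X : A[X]) ^ m * (P %ₘ X ^ (s - m)) ≠ 0 :=
                mul_ne_zero (pow_ne_zero _ Polynomial.X_ne_zero) hr0
              rw [← Polynomial.natDegree_lt_iff_degree_lt hne]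
              have h2 := Polynomial.natDegree_mul_le (p := (X : A[X]) ^ m)
                (q := P %ₘ X ^ (s - m))
              rw [Polynomial.natDegree_X_pow] at h2
              omega
        rw [hd]
        exact hβ (s - m)
  -- main proof
  apply Set.Subset.antisymm
  · rintro ξ hξ
    have hξ' : ∀ m ∈ MmodA A 𝕜 K α, ξ * m ∈ MmodA A 𝕜 K α := hξ
    constructor
    · have h1 : ξ ∈ MmodA A 𝕜 K α := by
        have h2 := hξ' 1 (by simpa using hpow_mem 0 hn1)
        simpa using h2
      have h2 : ∀ x ∈ MmodA A 𝕜 K α, x ∈ Algebra.adjoin A {α} := by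
        intro x hx
        induction hx using Submodule.span_induction with
        | mem y hy =>
          obtain ⟨i, rfl⟩ := hy
          show α ^ (i : ℕ) ∈ Algebra.adjoin A {α}
          exact pow_mem (Algebra.subset_adjoin (Set.mem_singleton α)) _
        | zero => exact zero_mem _
        | add y z _ _ ihy ihz => exact add_mem ihy ihz
        | smul a y _ ih => exact Subalgebra.smul_mem _ ih a
      exact h2 ξ h1
    · have h1 := hξ' (α ^ (n - 1)) (hpow_mem (n - 1) (by omega))
      have h2 : ∀ x ∈ MmodA A 𝕜 K α, x * (α⁻¹) ^ (n - 1) ∈ Algebra.adjoin A {α⁻¹} := by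
        intro x hx
        induction hx using Submodule.span_induction with
        | mem y hy =>
          obtain ⟨i, rfl⟩ := hy
          have hi : (i : ℕ) < n := i.isLt
          show α ^ (i : ℕ) * α⁻¹ ^ (n - 1) ∈ Algebra.adjoin A {α⁻¹}
          have h3 : α ^ (i : ℕ) * α⁻¹ ^ (n - 1) = α⁻¹ ^ (n - 1 - (i : ℕ)) := by
            have h5 : α⁻¹ ^ (n - 1) = α⁻¹ ^ (i : ℕ) * α⁻¹ ^ (n - 1 - (i : ℕ)) := by
              rw [← pow_add]; congr 1; omega
            rw [h5, ← mul_assoc, ← mul_pow, mul_inv_cancel₀ hα0, one_pow, one_mul]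
          rw [h3]
          exact pow_mem (Algebra.subset_adjoin (Set.mem_singleton α⁻¹)) _
        | zero => rw [zero_mul]; exact zero_mem _
        | add y z _ _ ihy ihz => rw [add_mul]; exact add_mem ihy ihz
        | smul a y _ ih => rw [smul_mul_assoc]; exact Subalgebra.smul_mem _ ih a
      have h3 := h2 _ h1
      have h4 : ξ * α ^ (n - 1) * α⁻¹ ^ (n - 1) = ξ := by
        rw [mul_assoc, ← mul_pow, mul_inv_cancel₀ hα0, one_pow, mul_one]
      rwa [h4] at h3
  · rintro ξ ⟨hp', hq'⟩
    rw [SetLike.mem_coe, Algebra.adjoin_singleton_eq_range_aeval] at hp' hq'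
    obtain ⟨p, hp'⟩ := hp'
    obtain ⟨q, hq'⟩ := hq'
    have hp : aeval α p = ξ := hp'
    have hq : aeval α⁻¹ q = ξ := hq'
    set e := q.natDegree with hedef
    set qs : A[X] := ∑ j ∈ Finset.range (e + 1), C (q.coeff j) * X ^ (e - j) with hqs
    set F : A[X] := X ^ e * p - qs with hF
    have hqs_val : aeval α qs = α ^ e * ξ := by
      rw [hqs, map_sum]
      have h1 : aeval α⁻¹ q = ∑ j ∈ Finset.range (e + 1), q.coeff j • (α⁻¹) ^ j :=
        Polynomial.aeval_eq_sum_range _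
      rw [← hq, h1, Finset.mul_sum]
      apply Finset.sum_congr rfl
      intro j hj
      have hje : j ≤ e := by simpa [Nat.lt_succ_iff] using hj
      rw [map_mul, Polynomial.aeval_C, map_pow, Polynomial.aeval_X, mul_smul_comm,
        ← Algebra.smul_def]
      congr 1
      rw [inv_pow, eq_mul_inv_iff_mul_eq₀ (pow_ne_zero j hα0), ← pow_add,
        Nat.sub_add_cancel hje]
    have hFα : aeval α F = 0 := by
      rw [hF, map_sub, map_mul, map_pow, Polynomial.aeval_X, hp, hqs_val, sub_self]
    obtain ⟨Q, hFPQ⟩ := hPdvd F hFα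
    have hXe : ((X : A[X]) ^ e).Monic := monic_X_pow e
    have hdivF : F /ₘ X ^ e = p - C (q.coeff 0) := by
      apply hdiv _ _ _ (C (q.coeff 0) * X ^ e - qs) hXe
      · rw [hF]; ring
      · rw [Polynomial.degree_X_pow]
        have hsplit : qs = (∑ j ∈ Finset.range e, C (q.coeff (j + 1)) * X ^ (e - (j + 1))) +
            C (q.coeff 0) * X ^ e := by
          rw [hqs, Finset.sum_range_succ']
          simp
        rw [hsplit]
        have h5 : C (q.coeff 0) * X ^ e -
            ((∑ j ∈ Finset.range e, C (q.coeff (j + 1)) * X ^ (e - (j + 1))) +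
              C (q.coeff 0) * X ^ e) =
            -(∑ j ∈ Finset.range e, C (q.coeff (j + 1)) * X ^ (e - (j + 1))) := by ring
        rw [h5, Polynomial.degree_neg]
        refine lt_of_le_of_lt (Polynomial.degree_sum_le _ _) ?_
        refine (Finset.sup_lt_iff (by exact_mod_cast WithBot.bot_lt_coe e)).mpr ?_
        intro j hj
        refine lt_of_le_of_lt (Polynomial.degree_C_mul_X_pow_le _ _) ?_
        exact_mod_cast (by have := Finset.mem_range.mp hj; omega : e - (j + 1) < e)
    have hξeq : ξ = algebraMap A K (q.coeff 0) + aeval α (F /ₘ X ^ e) := by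
      rw [hdivF, map_sub, Polynomial.aeval_C, hp]
      ring
    rw [SetLike.mem_coe, hξeq, hFPQ]
    exact (Aring A 𝕜 K α).add_mem (halg _) (hkey Q e)
end
end

section
/- Let 𝕜 be a field of characteristic 0 and K a finite extension of 𝕜 with [K:𝕜] = 3. Let α, β ∈ K with 𝕜(α) = 𝕜(β) = K. Then α and β are GL₂(𝕜)-equivalent, i.e., β = (aα+b)/(cα+d) for some (a b; c d) ∈ GL₂(𝕜). -/
noncomputable section

lemma aux_gen_not_in_base
    (𝕜 : Type*) [Field 𝕜]
    (K : Type*) [Field K] [Algebra 𝕜 K] (h3 : Module.finrank 𝕜 K = 3)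
    (γ : K) (hγ : Algebra.adjoin 𝕜 {γ} = ⊤) :
    γ ∉ Set.range (algebraMap 𝕜 K) := by
  rintro ⟨x, rfl⟩
  have hb : (⊥ : Subalgebra 𝕜 K) = ⊤ := by
    refine le_antisymm bot_le ?_
    rw [← hγ, Algebra.adjoin_le_iff]
    intro y hy
    simp only [Set.mem_singleton_iff] at hy
    subst hy
    exact ⟨x, rfl⟩
  have h1 := Subalgebra.bot_eq_top_iff_finrank_eq_one.mp hb
  rw [h3] at h1
  norm_num at h1

lemma aux_lin_indep
    (𝕜 : Type*) [Field 𝕜]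
    (K : Type*) [Field K] [Algebra 𝕜 K]
    (γ : K) (hγ : γ ∉ Set.range (algebraMap 𝕜 K))
    (e f : 𝕜) (h : algebraMap 𝕜 K e * γ + algebraMap 𝕜 K f = 0) :
    e = 0 ∧ f = 0 := by
  by_cases he : e = 0
  · subst he
    simp only [map_zero, zero_mul, zero_add] at h
    exact ⟨rfl, (map_eq_zero (algebraMap 𝕜 K)).mp h⟩
  · exfalso
    apply hγ
    refine ⟨-f / e, ?_⟩
    have heK : algebraMap 𝕜 K e ≠ 0 := by
      simpa using he
    rw [map_div₀, map_neg, div_eq_iff heK]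
    linear_combination -h

/-- Let `𝕜` be a field of characteristic `0` and `K` a finite extension of
`𝕜` with `[K:𝕜] = 3`. Let `α, β ∈ K` with `𝕜(α) = 𝕜(β) = K`. Then `α` and `β` are
`GL₂(𝕜)`-equivalent: `β = (aα+b)/(cα+d)` for some `(a b; c d) ∈ GL₂(𝕜)`. -/
theorem cubic_generators_GL2k_equivalent
    (𝕜 : Type*) [Field 𝕜] [CharZero 𝕜]
    (K : Type*) [Field K] [Algebra 𝕜 K] (h3 : Module.finrank 𝕜 K = 3)
    (α β : K) (hα : Algebra.adjoin 𝕜 {α} = ⊤) (hβ : Algebra.adjoin 𝕜 {β} = ⊤) :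
    ∃ a b c d : 𝕜, a * d - b * c ≠ 0 ∧
      β = (algebraMap 𝕜 K a * α + algebraMap 𝕜 K b) /
          (algebraMap 𝕜 K c * α + algebraMap 𝕜 K d) := by
  have hfd : FiniteDimensional 𝕜 K := FiniteDimensional.of_finrank_eq_succ h3
  have hαr : α ∉ Set.range (algebraMap 𝕜 K) := aux_gen_not_in_base 𝕜 K h3 α hα
  have hβr : β ∉ Set.range (algebraMap 𝕜 K) := aux_gen_not_in_base 𝕜 K h3 β hβ
  -- the four elements α*β, β, α, 1 are linearly dependent
  have hdep : ¬ LinearIndependent 𝕜 ![α * β, β, α, (1 : K)] := by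
    intro hli
    have := hli.fintype_card_le_finrank
    rw [h3] at this
    simp at this
  rw [Fintype.not_linearIndependent_iff] at hdep
  obtain ⟨g, hg, i, hi⟩ := hdep
  have hsum : algebraMap 𝕜 K (g 0) * (α * β) + algebraMap 𝕜 K (g 1) * β
      + algebraMap 𝕜 K (g 2) * α + algebraMap 𝕜 K (g 3) = 0 := by
    rw [Fin.sum_univ_four] at hg
    simpa [Algebra.smul_def] using hg
  -- (g 0, g 1) ≠ (0, 0)
  have hcd : ¬ (g 0 = 0 ∧ g 1 = 0) := by
    rintro ⟨hc, hd⟩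
    rw [hc, hd] at hsum
    simp only [map_zero, zero_mul, zero_add] at hsum
    obtain ⟨h2, h3'⟩ := aux_lin_indep 𝕜 K α hαr (g 2) (g 3) hsum
    fin_cases i <;> simp_all
  have hden : algebraMap 𝕜 K (g 0) * α + algebraMap 𝕜 K (g 1) ≠ 0 := by
    intro h
    exact hcd (aux_lin_indep 𝕜 K α hαr (g 0) (g 1) h)
  have hkey : β * (algebraMap 𝕜 K (g 0) * α + algebraMap 𝕜 K (g 1))
      = algebraMap 𝕜 K (-g 2) * α + algebraMap 𝕜 K (-g 3) := by
    rw [map_neg, map_neg]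
    linear_combination hsum
  refine ⟨-g 2, -g 3, g 0, g 1, ?_, ?_⟩
  · intro hdet
    -- otherwise β would lie in the base field
    apply hβr
    by_cases hc : g 0 = 0
    · have hd : g 1 ≠ 0 := fun hd => hcd ⟨hc, hd⟩
      have ha : g 2 = 0 := by
        have h2 : g 2 * g 1 = 0 := by
          rw [hc] at hdet
          linear_combination -hdet
        exact (mul_eq_zero.mp h2).resolve_right hd
      refine ⟨-g 3 / g 1, ?_⟩
      have hdK : algebraMap 𝕜 K (g 1) ≠ 0 := by simpa using hd
      rw [map_div₀, div_eq_iff hdK]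
      rw [hc, ha] at hkey
      simp only [map_zero, zero_mul, zero_add, neg_zero] at hkey
      linear_combination -hkey
    · refine ⟨-g 2 / g 0, ?_⟩
      have hcK : algebraMap 𝕜 K (g 0) ≠ 0 := by simpa using hc
      rw [map_div₀, div_eq_iff hcK]
      refine mul_right_cancel₀ hden ?_
      have hBD : algebraMap 𝕜 K (g 0) * algebraMap 𝕜 K (-g 3)
          = algebraMap 𝕜 K (-g 2) * algebraMap 𝕜 K (g 1) := by
        rw [← map_mul, ← map_mul]
        congr 1
        linear_combination -hdet
      linear_combination -algebraMap 𝕜 K (g 0) * hkey - hBD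
  · rw [eq_div_iff hden]
    exact hkey
end
end

section
/- Let 𝕜 be a field of characteristic 0, K a finite extension of 𝕜 of degree n ≥ 4, and α, β ∈ K with 𝕜(α) = 𝕜(β) = K. Then α and β are GL₂(𝕜)-equivalent if and only if cr_{ijkl}(α) = cr_{ijkl}(β) for all pairwise distinct i, j, k, l ∈ {1,…,n}. -/
set_option linter.unusedSectionVars false

noncomputable section

variable (𝕜 : Type*) [Field 𝕜] [CharZero 𝕜]
  (K : Type*) [Field K] [Algebra 𝕜 K]

/-- The cross ratio `cr_{ijkl}(α)` of the conjugates `α^{(i)} = σ i α` of `α`. -/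
def crossRatio (L : Type*) [Field L] [Algebra 𝕜 L]
    (σ : Fin (Module.finrank 𝕜 K) → (K →ₐ[𝕜] L)) (α : K)
    (i j k l : Fin (Module.finrank 𝕜 K)) : L :=
  ((σ i α - σ j α) * (σ k α - σ l α)) / ((σ i α - σ k α) * (σ j α - σ l α))

/-- An algebra hom out of `K` is determined by its value on a generator. -/
private lemma algHom_ext_gen {L' : Type*} [Field L'] [Algebra 𝕜 L'] {α : K}
    (hα : Algebra.adjoin 𝕜 {α} = ⊤) {f g : K →ₐ[𝕜] L'} (h : f α = g α) : f = g := by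
  have h1 : Algebra.adjoin 𝕜 {α} ≤ AlgHom.equalizer f g :=
    Algebra.adjoin_le (Set.singleton_subset_iff.mpr h)
  rw [hα] at h1
  ext x
  exact h1 (Algebra.mem_top (x := x))

/-- Explicit Möbius transformation through three points, together with the fact that
a cross-ratio relation forces further points onto its graph. -/
private lemma moebius_exists {F : Type*} [Field F] {x1 x2 x3 y1 y2 y3 : F}
    (hx12 : x1 ≠ x2) (hx13 : x1 ≠ x3) (hx23 : x2 ≠ x3)
    (hy12 : y1 ≠ y2) (hy13 : y1 ≠ y3) (hy23 : y2 ≠ y3) :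
    ∃ a b c d : F, a * d - b * c ≠ 0 ∧
      y1 * (c * x1 + d) = a * x1 + b ∧
      y2 * (c * x2 + d) = a * x2 + b ∧
      y3 * (c * x3 + d) = a * x3 + b ∧
      ∀ X Y : F,
        (x1 - x2) * (x3 - X) * ((y1 - y3) * (y2 - Y)) =
          (y1 - y2) * (y3 - Y) * ((x1 - x3) * (x2 - X)) →
        Y * (c * X + d) = a * X + b := by
  refine ⟨(y1-y2)*(x1-x3)*y3-(x1-x2)*(y1-y3)*y2,
    (x1-x2)*(y1-y3)*y2*x3-(y1-y2)*(x1-x3)*y3*x2,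
    (y1-y2)*(x1-x3)-(x1-x2)*(y1-y3),
    (x1-x2)*(y1-y3)*x3-(y1-y2)*(x1-x3)*x2, ?_, by ring, by ring, by ring, ?_⟩
  · have h : ((y1-y2)*(x1-x3)*y3-(x1-x2)*(y1-y3)*y2) *
        ((x1-x2)*(y1-y3)*x3-(y1-y2)*(x1-x3)*x2) -
        ((x1-x2)*(y1-y3)*y2*x3-(y1-y2)*(x1-x3)*y3*x2) *
        ((y1-y2)*(x1-x3)-(x1-x2)*(y1-y3)) =
        (x1-x2)*(x1-x3)*(x2-x3)*((y1-y2)*((y1-y3)*(y2-y3))) := by ring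
    rw [h]
    exact mul_ne_zero (mul_ne_zero (mul_ne_zero (sub_ne_zero.mpr hx12) (sub_ne_zero.mpr hx13))
      (sub_ne_zero.mpr hx23)) (mul_ne_zero (sub_ne_zero.mpr hy12)
      (mul_ne_zero (sub_ne_zero.mpr hy13) (sub_ne_zero.mpr hy23)))
  · intro X Y h
    linear_combination -h

/-- Galois-type descent: an `L`-linear relation among the conjugates of four elements of `K`
yields a `𝕜`-linear relation among the elements themselves. -/
private lemma descend [FiniteDimensional 𝕜 K] {L : Type*} [Field L] [Algebra 𝕜 L]
    [FiniteDimensional 𝕜 L]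
    (σ : Fin (Module.finrank 𝕜 K) → (K →ₐ[𝕜] L)) (hσ : Function.Injective σ)
    (x : Fin 4 → K) (c : Fin 4 → L) (hc : c ≠ 0)
    (hrel : ∀ i, ∑ j, c j * σ i (x j) = 0) :
    ∃ d : Fin 4 → 𝕜, d ≠ 0 ∧ ∑ j, algebraMap 𝕜 K (d j) * x j = 0 := by
  classical
  by_contra hcon
  push_neg at hcon
  have hLI : ∀ d : Fin 4 → 𝕜, (∑ j, algebraMap 𝕜 K (d j) * x j) = 0 → d = 0 := by
    intro d hd
    by_contra hd0
    exact (hcon d hd0) hd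
  -- the trace pairing map
  set T : K →ₗ[𝕜] (Fin 4 → 𝕜) := LinearMap.pi (fun j => Algebra.traceForm 𝕜 K (x j)) with hT
  have hTapp : ∀ (y : K) (j : Fin 4), T y j = Algebra.trace 𝕜 K (x j * y) := by
    intro y j; rfl
  have hTsurj : Function.Surjective T := by
    rw [← LinearMap.range_eq_top]
    by_contra hne
    obtain ⟨f, hf0, hfbot⟩ := Submodule.exists_dual_map_eq_bot_of_lt_top
      (lt_top_iff_ne_top.mpr hne) inferInstance
    set lam : Fin 4 → 𝕜 := fun j => f (fun m => if j = m then 1 else 0) with hlam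
    have hfy : ∀ y : Fin 4 → 𝕜, f y = ∑ j, y j * lam j := by
      intro y
      rw [LinearMap.pi_apply_eq_sum_univ f y]
      simp [hlam, smul_eq_mul]
    have hfT : ∀ y : K, f (T y) = 0 := by
      intro y
      have hmem : f (T y) ∈ Submodule.map f (LinearMap.range T) :=
        Submodule.mem_map_of_mem (LinearMap.mem_range_self T y)
      rw [hfbot] at hmem
      exact (Submodule.mem_bot 𝕜).mp hmem
    have key : ∀ y : K, Algebra.traceForm 𝕜 K (∑ j, lam j • x j) y = 0 := by
      intro y
      have : Algebra.traceForm 𝕜 K (∑ j, lam j • x j) y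
          = ∑ j, lam j * Algebra.traceForm 𝕜 K (x j) y := by
        rw [map_sum]
        simp [LinearMap.sum_apply, LinearMap.smul_apply, smul_eq_mul]
      rw [this, ← hfT y, hfy (T y)]
      refine Finset.sum_congr rfl fun j _ => ?_
      rw [hTapp]
      rw [mul_comm]
      rfl
    have hz := (traceForm_nondegenerate 𝕜 K).1 _ key
    have hlam0 : lam = 0 := by
      apply hLI
      rw [← hz]
      refine Finset.sum_congr rfl fun j _ => ?_
      rw [Algebra.smul_def]
    apply hf0
    refine LinearMap.ext fun y => ?_
    rw [hfy y, hlam0]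
    simp
  -- move to an algebraic closure of 𝕜
  set E := AlgebraicClosure 𝕜
  have hι : Nonempty (L →ₐ[𝕜] E) := ⟨IsAlgClosed.lift⟩
  obtain ⟨ι⟩ := hι
  have hιinj : Function.Injective ι := ι.toRingHom.injective
  set σ' : Fin (Module.finrank 𝕜 K) → (K →ₐ[𝕜] E) := fun i => ι.comp (σ i) with hσ'def
  have hσ'inj : Function.Injective σ' := by
    intro i j h
    apply hσ
    ext z
    exact hιinj (congrArg (fun (f : K →ₐ[𝕜] E) => f z) h)
  have hcard : Fintype.card (K →ₐ[𝕜] E) = Module.finrank 𝕜 K := AlgHom.card 𝕜 K E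
  have hbij : Function.Bijective σ' :=
    (Fintype.bijective_iff_injective_and_card σ').mpr
      ⟨hσ'inj, by rw [hcard, Fintype.card_fin]⟩
  have hall : ∀ ρ : K →ₐ[𝕜] E, ∑ j, ι (c j) * ρ (x j) = 0 := by
    intro ρ
    obtain ⟨i, rfl⟩ := hbij.surjective ρ
    have h1 := congrArg ι (hrel i)
    simpa [map_sum, map_mul, hσ'def] using h1
  have hczero : ∀ m, c m = 0 := by
    intro m
    obtain ⟨y, hy⟩ := hTsurj (fun j => if j = m then 1 else 0)
    have h2 : ∑ j, ι (c j) * algebraMap 𝕜 E (Algebra.trace 𝕜 K (x j * y)) = 0 := by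
      have hstep : ∀ j : Fin 4, ι (c j) * algebraMap 𝕜 E (Algebra.trace 𝕜 K (x j * y))
          = ∑ ρ : K →ₐ[𝕜] E, ι (c j) * (ρ (x j) * ρ y) := by
        intro j
        rw [trace_eq_sum_embeddings (E := E), Finset.mul_sum]
        exact Finset.sum_congr rfl fun ρ _ => by rw [map_mul]
      rw [Finset.sum_congr rfl fun j _ => hstep j, Finset.sum_comm]
      refine Finset.sum_eq_zero fun ρ _ => ?_
      have : ∑ j, ι (c j) * (ρ (x j) * ρ y) = (∑ j, ι (c j) * ρ (x j)) * ρ y := by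
        rw [Finset.sum_mul]
        exact Finset.sum_congr rfl fun j _ => by ring
      rw [this, hall ρ, zero_mul]
    have h3 : ∀ j : Fin 4, Algebra.trace 𝕜 K (x j * y) = if j = m then 1 else 0 := by
      intro j
      have := congrFun hy j
      rw [hTapp] at this
      exact this
    rw [Finset.sum_congr rfl fun j _ => by rw [h3 j]] at h2
    have h4 : ι (c m) = 0 := by
      rw [Finset.sum_eq_single m] at h2
      · simpa using h2
      · intro j _ hj
        simp [hj]
      · intro h
        exact absurd (Finset.mem_univ m) h
    exact hιinj (by rw [h4, map_zero])
  exact hc (funext hczero)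

/-- Let `𝕜` be a field of characteristic `0`, `K` a finite extension of `𝕜`
of degree `n ≥ 4`, and `α, β ∈ K` with `𝕜(α) = 𝕜(β) = K`. Then `α` and `β` are
`GL₂(𝕜)`-equivalent if and only if `cr_{ijkl}(α) = cr_{ijkl}(β)` for all pairwise distinct
`i, j, k, l ∈ {1,…,n}`. Here the conjugates are taken with respect to the `n` distinct
`𝕜`-embeddings `σ i` of `K` into a normal closure `L` of `K` over `𝕜`. -/
theorem GL2k_equivalent_iff_crossRatios_eq
    (hn : 4 ≤ Module.finrank 𝕜 K)
    (α β : K) (hα : Algebra.adjoin 𝕜 {α} = ⊤) (hβ : Algebra.adjoin 𝕜 {β} = ⊤)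
    (L : Type*) [Field L] [Algebra 𝕜 L] [Algebra K L] [IsScalarTower 𝕜 K L]
    [FiniteDimensional 𝕜 L] [Normal 𝕜 L]
    (σ : Fin (Module.finrank 𝕜 K) → (K →ₐ[𝕜] L)) (hσ : Function.Injective σ) :
    (∃ a b c d : 𝕜, a * d - b * c ≠ 0 ∧
        β = (algebraMap 𝕜 K a * α + algebraMap 𝕜 K b) /
            (algebraMap 𝕜 K c * α + algebraMap 𝕜 K d)) ↔
      (∀ i j k l : Fin (Module.finrank 𝕜 K),
        i ≠ j → i ≠ k → i ≠ l → j ≠ k → j ≠ l → k ≠ l →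
        crossRatio 𝕜 K L σ α i j k l = crossRatio 𝕜 K L σ β i j k l) := by
  classical
  haveI : FiniteDimensional 𝕜 K := FiniteDimensional.left 𝕜 K L
  have hKtriv : ∀ γ : K, Algebra.adjoin 𝕜 {γ} = ⊤ → ∀ t : 𝕜, γ ≠ algebraMap 𝕜 K t := by
    intro γ hγ t ht
    have hmem : γ ∈ (⊥ : Subalgebra 𝕜 K) := Algebra.mem_bot.mpr ⟨t, ht.symm⟩
    have hle : Algebra.adjoin 𝕜 {γ} ≤ ⊥ := Algebra.adjoin_le (Set.singleton_subset_iff.mpr hmem)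
    rw [hγ] at hle
    have hbt : (⊥ : Subalgebra 𝕜 K) = ⊤ := le_antisymm bot_le (top_le_iff.mp hle).ge
    have h1 := Subalgebra.bot_eq_top_iff_finrank_eq_one.mp hbt
    omega
  have hAinj : Function.Injective fun p => σ p α := fun p q h => hσ (algHom_ext_gen 𝕜 K hα h)
  have hBinj : Function.Injective fun p => σ p β := fun p q h => hσ (algHom_ext_gen 𝕜 K hβ h)
  have hAne : ∀ p q, p ≠ q → σ p α - σ q α ≠ 0 :=
    fun p q h => sub_ne_zero.mpr fun e => h (hAinj e)
  have hBne : ∀ p q, p ≠ q → σ p β - σ q β ≠ 0 :=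
    fun p q h => sub_ne_zero.mpr fun e => h (hBinj e)
  constructor
  · -- forward direction
    rintro ⟨a, b, c, d, hdet, hβab⟩
    have hαnot : ∀ t : 𝕜, α ≠ algebraMap 𝕜 K t := hKtriv α hα
    have hden : algebraMap 𝕜 K c * α + algebraMap 𝕜 K d ≠ 0 := by
      intro h0
      by_cases hc0 : c = 0
      · have hd0 : d = 0 := by
          rw [hc0] at h0
          simp only [map_zero, zero_mul, zero_add] at h0
          exact (map_eq_zero _).mp h0
        apply hdet; rw [hc0, hd0]; ring
      · apply hαnot (-(d / c))
        have hcK : algebraMap 𝕜 K c ≠ 0 := fun h => hc0 ((map_eq_zero _).mp h)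
        rw [map_neg, map_div₀, ← neg_div, eq_div_iff hcK]
        linear_combination h0
    have hβ' : β * (algebraMap 𝕜 K c * α + algebraMap 𝕜 K d)
        = algebraMap 𝕜 K a * α + algebraMap 𝕜 K b := by
      rw [hβab, div_mul_cancel₀ _ hden]
    intro i j k l hij hik hil hjk hjl hkl
    have hrel : ∀ p : Fin (Module.finrank 𝕜 K),
        σ p β * (algebraMap 𝕜 L c * σ p α + algebraMap 𝕜 L d)
          = algebraMap 𝕜 L a * σ p α + algebraMap 𝕜 L b := by
      intro p
      have h1 := congrArg (σ p) hβ'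
      simpa [map_mul, map_add, AlgHom.commutes] using h1
    set den : Fin (Module.finrank 𝕜 K) → L :=
      fun p => algebraMap 𝕜 L c * σ p α + algebraMap 𝕜 L d with hdenL
    have hden' : ∀ p, den p ≠ 0 := by
      intro p h0
      apply hden
      have h1 : σ p (algebraMap 𝕜 K c * α + algebraMap 𝕜 K d) = 0 := by
        simpa [map_mul, map_add, AlgHom.commutes] using h0
      exact (map_eq_zero (σ p)).mp h1
    set Δ : L := algebraMap 𝕜 L (a * d - b * c) with hΔdef
    have hΔ : Δ ≠ 0 := fun h => hdet ((map_eq_zero _).mp h)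
    have e1 : ∀ p q, (σ p β - σ q β) * (den p * den q) = Δ * (σ p α - σ q α) := by
      intro p q
      have h1 := hrel p
      have h2 := hrel q
      rw [hΔdef, map_sub, map_mul, map_mul, hdenL]
      linear_combination (algebraMap 𝕜 L c * σ q α + algebraMap 𝕜 L d) * h1
        - (algebraMap 𝕜 L c * σ p α + algebraMap 𝕜 L d) * h2
    rw [crossRatio, crossRatio, div_eq_div_iff
      (mul_ne_zero (hAne i k hik) (hAne j l hjl)) (mul_ne_zero (hBne i k hik) (hBne j l hjl))]
    have hP : den i * den j * (den k * den l) ≠ 0 :=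
      mul_ne_zero (mul_ne_zero (hden' i) (hden' j)) (mul_ne_zero (hden' k) (hden' l))
    refine mul_right_cancel₀ hP ?_
    have hNij := e1 i j
    have hNkl := e1 k l
    have hDik := e1 i k
    have hDjl := e1 j l
    linear_combination
      ((σ i α - σ j α) * (σ k α - σ l α)) * ((σ j β - σ l β) * (den j * den l)) * hDik
      + ((σ i α - σ j α) * (σ k α - σ l α)) * (Δ * (σ i α - σ k α)) * hDjl
      - ((σ i α - σ k α) * (σ j α - σ l α)) * ((σ k β - σ l β) * (den k * den l)) * hNij
      - ((σ i α - σ k α) * (σ j α - σ l α)) * (Δ * (σ i α - σ j α)) * hNkl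
  · -- backward direction
    intro hcr
    have h0n : 0 < Module.finrank 𝕜 K := by omega
    have h1n : 1 < Module.finrank 𝕜 K := by omega
    have h2n : 2 < Module.finrank 𝕜 K := by omega
    set i0 : Fin (Module.finrank 𝕜 K) := ⟨0, h0n⟩ with hi0
    set i1 : Fin (Module.finrank 𝕜 K) := ⟨1, h1n⟩ with hi1
    set i2 : Fin (Module.finrank 𝕜 K) := ⟨2, h2n⟩ with hi2
    have h01 : i0 ≠ i1 := by simp [hi0, hi1, Fin.ext_iff]
    have h02 : i0 ≠ i2 := by simp [hi0, hi2, Fin.ext_iff]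
    have h12 : i1 ≠ i2 := by simp [hi1, hi2, Fin.ext_iff]
    obtain ⟨a, b, c, d, hdet, hm1, hm2, hm3, hgen⟩ :=
      moebius_exists (F := L) (hAinj.ne h01) (hAinj.ne h02) (hAinj.ne h12)
        (hBinj.ne h01) (hBinj.ne h02) (hBinj.ne h12)
    have hrel : ∀ p, σ p β * (c * σ p α + d) = a * σ p α + b := by
      intro p
      by_cases e0 : p = i0
      · rw [e0]; exact hm1
      by_cases e1 : p = i1
      · rw [e1]; exact hm2
      by_cases e2 : p = i2
      · rw [e2]; exact hm3
      have hcr' := hcr i0 i1 i2 p h01 h02 (fun h => e0 h.symm) h12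
        (fun h => e1 h.symm) (fun h => e2 h.symm)
      rw [crossRatio, crossRatio, div_eq_div_iff
        (mul_ne_zero (hAne i0 i2 h02) (hAne i1 p fun h => e1 h.symm))
        (mul_ne_zero (hBne i0 i2 h02) (hBne i1 p fun h => e1 h.symm))] at hcr'
      exact hgen (σ p α) (σ p β) (by linear_combination hcr')
    have hrel' : ∀ p, ∑ j : Fin 4,
        (![a, b, -c, -d]) j * σ p ((![α, 1, α * β, β]) j) = 0 := by
      intro p
      have h1 := hrel p
      simp only [Fin.sum_univ_four, Matrix.cons_val_zero, Matrix.cons_val_one, Matrix.head_cons,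
        Matrix.cons_val_two, Matrix.tail_cons, Matrix.cons_val_three, map_one, map_mul, mul_one]
      linear_combination -h1
    have hc0 : (![a, b, -c, -d] : Fin 4 → L) ≠ 0 := by
      intro h
      apply hdet
      have ha := congrFun h 0
      have hb := congrFun h 1
      simp only [Matrix.cons_val_zero, Pi.zero_apply] at ha
      simp only [Matrix.cons_val_one, Matrix.cons_val_zero, Matrix.head_cons, Pi.zero_apply] at hb
      rw [ha, hb]; ring
    obtain ⟨dv, hdv0, hdvrel⟩ := descend 𝕜 K σ hσ ![α, 1, α * β, β] ![a, b, -c, -d] hc0 hrel'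
    rw [Fin.sum_univ_four] at hdvrel
    simp only [Matrix.cons_val_zero, Matrix.cons_val_one, Matrix.head_cons,
      Matrix.cons_val_two, Matrix.tail_cons, Matrix.cons_val_three, mul_one] at hdvrel
    -- hdvrel : aM (dv 0) * α + aM (dv 1) + aM (dv 2) * (α * β) + aM (dv 3) * β = 0
    set p : 𝕜 := dv 0
    set q : 𝕜 := dv 1
    set r : 𝕜 := dv 2
    set s : 𝕜 := dv 3
    have huv : ∀ u v : 𝕜, algebraMap 𝕜 K u * α + algebraMap 𝕜 K v = 0 → u = 0 ∧ v = 0 := by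
      intro u v h
      by_cases hu : u = 0
      · refine ⟨hu, ?_⟩
        rw [hu, map_zero, zero_mul, zero_add] at h
        exact (map_eq_zero _).mp h
      · exfalso
        apply hKtriv α hα (-(v / u))
        have huK : algebraMap 𝕜 K u ≠ 0 := fun h' => hu ((map_eq_zero _).mp h')
        rw [map_neg, map_div₀, ← neg_div, eq_div_iff huK]
        linear_combination h
    have hrs : algebraMap 𝕜 K r * α + algebraMap 𝕜 K s ≠ 0 := by
      intro h0
      have hpq : algebraMap 𝕜 K p * α + algebraMap 𝕜 K q = 0 := by
        have hb0 : β * (algebraMap 𝕜 K r * α + algebraMap 𝕜 K s) = 0 := by rw [h0, mul_zero]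
        linear_combination hdvrel - hb0
      obtain ⟨hp, hq⟩ := huv p q hpq
      obtain ⟨hr, hs⟩ := huv r s h0
      apply hdv0
      funext m
      fin_cases m <;> assumption
    have hβform0 : β * (algebraMap 𝕜 K r * α + algebraMap 𝕜 K s)
        = -(algebraMap 𝕜 K p * α + algebraMap 𝕜 K q) := by
      linear_combination hdvrel
    have hβform : β * (algebraMap 𝕜 K r * α + algebraMap 𝕜 K s)
        = algebraMap 𝕜 K (-p) * α + algebraMap 𝕜 K (-q) := by
      rw [map_neg, map_neg]
      linear_combination hdvrel
    have hdet2 : (-p) * s - (-q) * r ≠ 0 := by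
      intro hd
      have hqrps : q * r = p * s := by linear_combination hd
      by_cases hr : r = 0
      · have hs : s ≠ 0 := by
          intro hs0
          apply hrs
          rw [hr, hs0]
          simp
        have hp : p = 0 := by
          have h5 : p * s = 0 := by rw [← hqrps, hr, mul_zero]
          rcases mul_eq_zero.mp h5 with h | h
          · exact h
          · exact absurd h hs
        apply hKtriv β hβ (-(q / s))
        have hsK : algebraMap 𝕜 K s ≠ 0 := fun h' => hs ((map_eq_zero _).mp h')
        rw [map_neg, map_div₀, ← neg_div, eq_div_iff hsK]
        have hpK : algebraMap 𝕜 K p = 0 := by rw [hp, map_zero]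
        have hrK0 : algebraMap 𝕜 K r = 0 := by rw [hr, map_zero]
        linear_combination hβform0 - (β * α) * hrK0 - α * hpK
      · have hrK : algebraMap 𝕜 K r ≠ 0 := fun h' => hr ((map_eq_zero _).mp h')
        apply hKtriv β hβ (-(p / r))
        rw [map_neg, map_div₀, ← neg_div, eq_div_iff hrK]
        have hpsK : algebraMap 𝕜 K p * algebraMap 𝕜 K s
            = algebraMap 𝕜 K q * algebraMap 𝕜 K r := by
          rw [← map_mul, ← map_mul, hqrps]
        have h2 : (β * algebraMap 𝕜 K r + algebraMap 𝕜 K p)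
            * (algebraMap 𝕜 K r * α + algebraMap 𝕜 K s) = 0 := by
          linear_combination algebraMap 𝕜 K r * hβform0 + hpsK
        rcases mul_eq_zero.mp h2 with h | h
        · linear_combination h
        · exact absurd h hrs
    refine ⟨-p, -q, r, s, hdet2, ?_⟩
    rw [eq_div_iff hrs]
    exact hβform
end
end
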